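/- Let $\mathcal{N}(\mu,\sigma^2)$ be a Gaussian distribution, and fix $\alpha, p \in (0,1)$ with $p - \alpha \geq 0.0228$ and $p + \alpha \leq 0.9772$. Let $t$ satisfy $\Pr_{X\sim\mathcal{N}(\mu,\sigma^2)}[X < t] = p$ and let $\tilde{t}$ satisfy $\Pr_{X\sim\mathcal{N}(\mu,\sigma^2)}[X < \tilde{t}] \in (p-\alpha, p+\alpha)$. Then $|t - \tilde{t}| \leq 18.522\, \alpha \sigma$. -/

import Mathlib

open Real MeasureTheory Set Filter ProbabilityTheory
open scoped NNReal ENNReal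

lemma exp_neg_le_quad {u : ℝ} (hu : 0 ≤ u) : Real.exp (-u) ≤ 1 - u + u^2/2 := by
  have h1 : 1 + u + u^2/2 ≤ Real.exp u := by
    have := Real.sum_le_exp_of_nonneg hu 3
    simp [Finset.sum_range_succ, Nat.factorial] at this
    linarith
  have h0 : (0:ℝ) ≤ 1 - u + u^2/2 := by nlinarith [sq_nonneg (u-1)]
  rw [Real.exp_neg, inv_le_iff_one_le_mul₀ (Real.exp_pos u)]
  nlinarith [mul_le_mul_of_nonneg_left h1 h0]

lemma poly_int (a c : ℝ) : ∫ x in (0:ℝ)..c, (1 - a*x + a^2/2*x^2) = c - a*c^2/2 + a^2*c^3/6 := by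
  have h1 : IntervalIntegrable (fun u:ℝ => 1 - a*u) volume 0 c := by
    apply Continuous.intervalIntegrable; continuity
  have h2 : IntervalIntegrable (fun u:ℝ => a^2/2*u^2) volume 0 c := by
    apply Continuous.intervalIntegrable; continuity
  have h3 : IntervalIntegrable (fun u:ℝ => (1:ℝ)) volume 0 c := by
    apply Continuous.intervalIntegrable; continuity
  have h4 : IntervalIntegrable (fun u:ℝ => a*u) volume 0 c := by
    apply Continuous.intervalIntegrable; continuity
  rw [intervalIntegral.integral_add h1 h2, intervalIntegral.integral_sub h3 h4,
    intervalIntegral.integral_const_mul, intervalIntegral.integral_const_mul]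
  simp [integral_id, integral_pow]
  ring

lemma step_bound (a b : ℝ) (ha : 0 ≤ a) (hab : a ≤ b) :
    ∫ x in a..b, Real.exp (-(x^2/2)) ≤
      Real.exp (-(a^2/2)) * ((b-a) - a*(b-a)^2/2 + a^2*(b-a)^3/6) := by
  have hcont : Continuous fun x : ℝ => Real.exp (-(x^2/2)) := by continuity
  have hptw : ∀ x ∈ Set.Icc a b, Real.exp (-(x^2/2)) ≤
      Real.exp (-(a^2/2)) * (1 - a*(x-a) + a^2/2*(x-a)^2) := by
    intro x hx
    obtain ⟨hx1, hx2⟩ := hx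
    have h1 : Real.exp (-(x^2/2)) ≤ Real.exp (-(a^2/2)) * Real.exp (-(a*(x-a))) := by
      rw [← Real.exp_add]
      apply Real.exp_le_exp.mpr
      nlinarith [sq_nonneg (x-a)]
    have h2 : Real.exp (-(a*(x-a))) ≤ 1 - a*(x-a) + (a*(x-a))^2/2 :=
      exp_neg_le_quad (by nlinarith)
    have h3 := mul_le_mul_of_nonneg_left h2 (Real.exp_pos (-(a^2/2))).le
    calc Real.exp (-(x^2/2)) ≤ Real.exp (-(a^2/2)) * Real.exp (-(a*(x-a))) := h1
      _ ≤ Real.exp (-(a^2/2)) * (1 - a*(x-a) + (a*(x-a))^2/2) := h3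
      _ = Real.exp (-(a^2/2)) * (1 - a*(x-a) + a^2/2*(x-a)^2) := by ring
  have hint1 : IntervalIntegrable (fun x : ℝ => Real.exp (-(x^2/2))) volume a b :=
    hcont.intervalIntegrable a b
  have hint2 : IntervalIntegrable
      (fun x : ℝ => Real.exp (-(a^2/2)) * (1 - a*(x-a) + a^2/2*(x-a)^2)) volume a b := by
    apply Continuous.intervalIntegrable; continuity
  calc ∫ x in a..b, Real.exp (-(x^2/2))
      ≤ ∫ x in a..b, Real.exp (-(a^2/2)) * (1 - a*(x-a) + a^2/2*(x-a)^2) :=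
        intervalIntegral.integral_mono_on hab hint1 hint2 hptw
    _ = Real.exp (-(a^2/2)) * ((b-a) - a*(b-a)^2/2 + a^2*(b-a)^3/6) := by
        rw [intervalIntegral.integral_const_mul]
        congr 1
        have := intervalIntegral.integral_comp_sub_right
          (a := a) (b := b) (fun u : ℝ => 1 - a*u + a^2/2*u^2) a
        rw [this, sub_self, poly_int]

lemma exp_neg_le_of_taylor {c q : ℝ} (n : ℕ) (hc : 0 ≤ c) (hq : 0 < q)
    (h : q⁻¹ ≤ ∑ i ∈ Finset.range n, c^i/(Nat.factorial i)) : Real.exp (-c) ≤ q := by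
  have h2 : q⁻¹ ≤ Real.exp c := le_trans h (Real.sum_le_exp_of_nonneg hc n)
  have h3 := inv_anti₀ (inv_pos.mpr hq) h2
  rw [Real.exp_neg]; rwa [inv_inv] at h3

lemma fun_eq1 : (fun x : ℝ => Real.exp (-(x^2/2))) = (fun x : ℝ => Real.exp (-(1/2) * x^2)) := by
  funext x; ring_nf

lemma integrableOn_gauss (s : Set ℝ) : IntegrableOn (fun x : ℝ => Real.exp (-(x^2/2))) s := by
  rw [fun_eq1]
  exact (integrable_exp_neg_mul_sq (by norm_num)).integrableOn

lemma integrableOn_mul_gauss (s : Set ℝ) : IntegrableOn (fun x : ℝ => x * Real.exp (-(x^2/2))) s := by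
  have : (fun x : ℝ => x * Real.exp (-(x^2/2))) = (fun x : ℝ => x * Real.exp (-(1/2) * x^2)) := by
    funext x; ring_nf
  rw [this]
  exact (integrable_mul_exp_neg_mul_sq (by norm_num)).integrableOn

lemma tail_integral : ∫ x in Set.Ioi (4:ℝ), x * Real.exp (-(x^2/2)) = Real.exp (-8) := by
  have hderiv : ∀ x ∈ Set.Ici (4:ℝ), HasDerivAt (fun y : ℝ => -Real.exp (-(y^2/2)))
      (x * Real.exp (-(x^2/2))) x := by
    intro x _
    have h1 : HasDerivAt (fun y : ℝ => -(y^2/2)) (-x) x := by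
      have := ((hasDerivAt_pow 2 x).div_const 2).neg
      refine this.congr_deriv ?_; ring_nf
    have := (h1.exp).neg
    refine this.congr_deriv ?_; ring
  have htend : Tendsto (fun y : ℝ => -Real.exp (-(y^2/2))) atTop (nhds 0) := by
    rw [show (0:ℝ) = -0 by norm_num]
    apply Tendsto.neg
    apply Real.tendsto_exp_atBot.comp
    apply tendsto_neg_atBot_iff.mpr
    apply Tendsto.atTop_div_const (by norm_num)
    exact tendsto_pow_atTop (by norm_num)
  have := integral_Ioi_of_hasDerivAt_of_tendsto' hderiv (integrableOn_mul_gauss _) htend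
  rw [this]
  norm_num

lemma tail_bound : ∫ x in Set.Ioi (4:ℝ), Real.exp (-(x^2/2)) ≤ 0.0000839 := by
  have heq : (fun x : ℝ => (x/4) * Real.exp (-(x^2/2))) =
      (fun x : ℝ => (1/4) * (x * Real.exp (-(x^2/2)))) := by funext x; ring
  have h1 : ∫ x in Set.Ioi (4:ℝ), Real.exp (-(x^2/2)) ≤
      ∫ x in Set.Ioi (4:ℝ), (x/4) * Real.exp (-(x^2/2)) := by
    apply setIntegral_mono_on (integrableOn_gauss _)
      (by rw [heq]; exact (integrableOn_mul_gauss (Set.Ioi 4)).const_mul (1/4))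
      measurableSet_Ioi
    intro x hx
    have hx4 : (4:ℝ) < x := hx
    nlinarith [Real.exp_pos (-(x^2/2))]
  have h2 : ∫ x in Set.Ioi (4:ℝ), (x/4) * Real.exp (-(x^2/2)) = Real.exp (-8) / 4 := by
    rw [heq, MeasureTheory.integral_const_mul, tail_integral]; ring
  have h3 : Real.exp (-8) ≤ 0.0003355 := by
    apply exp_neg_le_of_taylor 40 (by norm_num) (by norm_num)
    simp [Finset.sum_range_succ, Nat.factorial]
    norm_num
  linarith

set_option maxHeartbeats 2000000 in
lemma main_sum : ∫ x in (2:ℝ)..4, Real.exp (-(x^2/2)) ≤ (5700759/100000000:ℝ) := by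
  have hi : ∀ a b : ℝ, IntervalIntegrable (fun x : ℝ => Real.exp (-(x^2/2))) volume a b := by
    intro a b; apply Continuous.intervalIntegrable; continuity
  have E0 : Real.exp (-((2:ℝ)^2/2)) ≤ (338353941/2500000000:ℝ) := by
    apply exp_neg_le_of_taylor 10 (by norm_num) (by norm_num)
    norm_num [Finset.sum_range_succ, Nat.factorial]
  have h0 : ∫ x in (2:ℝ)..(33/16:ℝ), Real.exp (-(x^2/2)) ≤ (994024843/125000000000:ℝ) := by
    refine le_trans (step_bound (2:ℝ) (33/16:ℝ) (by norm_num) (by norm_num)) ?_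
    refine le_trans (mul_le_mul_of_nonneg_right E0 (by norm_num)) ?_
    norm_num
  have c0 : ∫ x in (2:ℝ)..(33/16:ℝ), Real.exp (-(x^2/2)) ≤ (994024843/125000000000:ℝ) := h0
  have E1 : Real.exp (-((33/16:ℝ)^2/2)) ≤ (74505679/625000000:ℝ) := by
    apply exp_neg_le_of_taylor 10 (by norm_num) (by norm_num)
    norm_num [Finset.sum_range_succ, Nat.factorial]
  have h1 : ∫ x in (33/16:ℝ)..(17/8:ℝ), Real.exp (-(x^2/2)) ≤ (3495494821/500000000000:ℝ) := by
    refine le_trans (step_bound (33/16:ℝ) (17/8:ℝ) (by norm_num) (by norm_num)) ?_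
    refine le_trans (mul_le_mul_of_nonneg_right E1 (by norm_num)) ?_
    norm_num
  have c1 : ∫ x in (2:ℝ)..(17/8:ℝ), Real.exp (-(x^2/2)) ≤ (7471594193/500000000000:ℝ) := by
    have hh := intervalIntegral.integral_add_adjacent_intervals (hi 2 (33/16:ℝ)) (hi (33/16:ℝ) (17/8:ℝ))
    rw [← hh]; linarith [c0, h1]
  have E2 : Real.exp (-((17/8:ℝ)^2/2)) ≤ (522959957/5000000000:ℝ) := by
    apply exp_neg_le_of_taylor 10 (by norm_num) (by norm_num)
    norm_num [Finset.sum_range_succ, Nat.factorial]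
  have h2 : ∫ x in (17/8:ℝ)..(35/16:ℝ), Real.exp (-(x^2/2)) ≤ (3061059853/500000000000:ℝ) := by
    refine le_trans (step_bound (17/8:ℝ) (35/16:ℝ) (by norm_num) (by norm_num)) ?_
    refine le_trans (mul_le_mul_of_nonneg_right E2 (by norm_num)) ?_
    norm_num
  have c2 : ∫ x in (2:ℝ)..(35/16:ℝ), Real.exp (-(x^2/2)) ≤ (5266327023/250000000000:ℝ) := by
    have hh := intervalIntegral.integral_add_adjacent_intervals (hi 2 (17/8:ℝ)) (hi (17/8:ℝ) (35/16:ℝ))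
    rw [← hh]; linarith [c1, h2]
  have E3 : Real.exp (-((35/16:ℝ)^2/2)) ≤ (456987913/5000000000:ℝ) := by
    apply exp_neg_le_of_taylor 11 (by norm_num) (by norm_num)
    norm_num [Finset.sum_range_succ, Nat.factorial]
  have h3 : ∫ x in (35/16:ℝ)..(9/4:ℝ), Real.exp (-(x^2/2)) ≤ (2669826099/500000000000:ℝ) := by
    refine le_trans (step_bound (35/16:ℝ) (9/4:ℝ) (by norm_num) (by norm_num)) ?_
    refine le_trans (mul_le_mul_of_nonneg_right E3 (by norm_num)) ?_
    norm_num
  have c3 : ∫ x in (2:ℝ)..(9/4:ℝ), Real.exp (-(x^2/2)) ≤ (2640496029/100000000000:ℝ) := by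
    have hh := intervalIntegral.integral_add_adjacent_intervals (hi 2 (35/16:ℝ)) (hi (35/16:ℝ) (9/4:ℝ))
    rw [← hh]; linarith [c2, h3]
  have E4 : Real.exp (-((9/4:ℝ)^2/2)) ≤ (795649743/10000000000:ℝ) := by
    apply exp_neg_le_of_taylor 11 (by norm_num) (by norm_num)
    norm_num [Finset.sum_range_succ, Nat.factorial]
  have h4 : ∫ x in (9/4:ℝ)..(37/16:ℝ), Real.exp (-(x^2/2)) ≤ (579943751/125000000000:ℝ) := by
    refine le_trans (step_bound (9/4:ℝ) (37/16:ℝ) (by norm_num) (by norm_num)) ?_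
    refine le_trans (mul_le_mul_of_nonneg_right E4 (by norm_num)) ?_
    norm_num
  have c4 : ∫ x in (2:ℝ)..(37/16:ℝ), Real.exp (-(x^2/2)) ≤ (15522255149/500000000000:ℝ) := by
    have hh := intervalIntegral.integral_add_adjacent_intervals (hi 2 (9/4:ℝ)) (hi (9/4:ℝ) (37/16:ℝ))
    rw [← hh]; linarith [c3, h4]
  have E5 : Real.exp (-((37/16:ℝ)^2/2)) ≤ (172488111/2500000000:ℝ) := by
    apply exp_neg_le_of_taylor 11 (by norm_num) (by norm_num)
    norm_num [Finset.sum_range_succ, Nat.factorial]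
  have h5 : ∫ x in (37/16:ℝ)..(19/8:ℝ), Real.exp (-(x^2/2)) ≤ (1003897971/250000000000:ℝ) := by
    refine le_trans (step_bound (37/16:ℝ) (19/8:ℝ) (by norm_num) (by norm_num)) ?_
    refine le_trans (mul_le_mul_of_nonneg_right E5 (by norm_num)) ?_
    norm_num
  have c5 : ∫ x in (2:ℝ)..(19/8:ℝ), Real.exp (-(x^2/2)) ≤ (17530051091/500000000000:ℝ) := by
    have hh := intervalIntegral.integral_add_adjacent_intervals (hi 2 (37/16:ℝ)) (hi (37/16:ℝ) (19/8:ℝ))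
    rw [← hh]; linarith [c4, h5]
  have E6 : Real.exp (-((19/8:ℝ)^2/2)) ≤ (74497117/1250000000:ℝ) := by
    apply exp_neg_le_of_taylor 11 (by norm_num) (by norm_num)
    norm_num [Finset.sum_range_succ, Nat.factorial]
  have h6 : ∫ x in (19/8:ℝ)..(39/16:ℝ), Real.exp (-(x^2/2)) ≤ (1731040213/500000000000:ℝ) := by
    refine le_trans (step_bound (19/8:ℝ) (39/16:ℝ) (by norm_num) (by norm_num)) ?_
    refine le_trans (mul_le_mul_of_nonneg_right E6 (by norm_num)) ?_
    norm_num
  have c6 : ∫ x in (2:ℝ)..(39/16:ℝ), Real.exp (-(x^2/2)) ≤ (2407636413/62500000000:ℝ) := by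
    have hh := intervalIntegral.integral_add_adjacent_intervals (hi 2 (19/8:ℝ)) (hi (19/8:ℝ) (39/16:ℝ))
    rw [← hh]; linarith [c5, h6]
  have E7 : Real.exp (-((39/16:ℝ)^2/2)) ≤ (102562131/2000000000:ℝ) := by
    apply exp_neg_le_of_taylor 11 (by norm_num) (by norm_num)
    norm_num [Finset.sum_range_succ, Nat.factorial]
  have h7 : ∫ x in (39/16:ℝ)..(5/2:ℝ), Real.exp (-(x^2/2)) ≤ (297332819/100000000000:ℝ) := by
    refine le_trans (step_bound (39/16:ℝ) (5/2:ℝ) (by norm_num) (by norm_num)) ?_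
    refine le_trans (mul_le_mul_of_nonneg_right E7 (by norm_num)) ?_
    norm_num
  have c7 : ∫ x in (2:ℝ)..(5/2:ℝ), Real.exp (-(x^2/2)) ≤ (20747755399/500000000000:ℝ) := by
    have hh := intervalIntegral.integral_add_adjacent_intervals (hi 2 (39/16:ℝ)) (hi (39/16:ℝ) (5/2:ℝ))
    rw [← hh]; linarith [c6, h7]
  have E8 : Real.exp (-((5/2:ℝ)^2/2)) ≤ (21970753/500000000:ℝ) := by
    apply exp_neg_le_of_taylor 12 (by norm_num) (by norm_num)
    norm_num [Finset.sum_range_succ, Nat.factorial]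
  have h8 : ∫ x in (5/2:ℝ)..(41/16:ℝ), Real.exp (-(x^2/2)) ≤ (1271480447/500000000000:ℝ) := by
    refine le_trans (step_bound (5/2:ℝ) (41/16:ℝ) (by norm_num) (by norm_num)) ?_
    refine le_trans (mul_le_mul_of_nonneg_right E8 (by norm_num)) ?_
    norm_num
  have c8 : ∫ x in (2:ℝ)..(41/16:ℝ), Real.exp (-(x^2/2)) ≤ (11009617923/250000000000:ℝ) := by
    have hh := intervalIntegral.integral_add_adjacent_intervals (hi 2 (5/2:ℝ)) (hi (5/2:ℝ) (41/16:ℝ))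
    rw [← hh]; linarith [c7, h8]
  have E9 : Real.exp (-((41/16:ℝ)^2/2)) ≤ (187570209/5000000000:ℝ) := by
    apply exp_neg_le_of_taylor 12 (by norm_num) (by norm_num)
    norm_num [Finset.sum_range_succ, Nat.factorial]
  have h9 : ∫ x in (41/16:ℝ)..(21/8:ℝ), Real.exp (-(x^2/2)) ≤ (2166897523/1000000000000:ℝ) := by
    refine le_trans (step_bound (41/16:ℝ) (21/8:ℝ) (by norm_num) (by norm_num)) ?_
    refine le_trans (mul_le_mul_of_nonneg_right E9 (by norm_num)) ?_
    norm_num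
  have c9 : ∫ x in (2:ℝ)..(21/8:ℝ), Real.exp (-(x^2/2)) ≤ (9241073843/200000000000:ℝ) := by
    have hh := intervalIntegral.integral_add_adjacent_intervals (hi 2 (41/16:ℝ)) (hi (41/16:ℝ) (21/8:ℝ))
    rw [← hh]; linarith [c8, h9]
  have E10 : Real.exp (-((21/8:ℝ)^2/2)) ≤ (319028111/10000000000:ℝ) := by
    apply exp_neg_le_of_taylor 12 (by norm_num) (by norm_num)
    norm_num [Finset.sum_range_succ, Nat.factorial]
  have h10 : ∫ x in (21/8:ℝ)..(43/16:ℝ), Real.exp (-(x^2/2)) ≤ (367861279/200000000000:ℝ) := by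
    refine le_trans (step_bound (21/8:ℝ) (43/16:ℝ) (by norm_num) (by norm_num)) ?_
    refine le_trans (mul_le_mul_of_nonneg_right E10 (by norm_num)) ?_
    norm_num
  have c10 : ∫ x in (2:ℝ)..(43/16:ℝ), Real.exp (-(x^2/2)) ≤ (4804467561/100000000000:ℝ) := by
    have hh := intervalIntegral.integral_add_adjacent_intervals (hi 2 (21/8:ℝ)) (hi (21/8:ℝ) (43/16:ℝ))
    rw [← hh]; linarith [c9, h10]
  have E11 : Real.exp (-((43/16:ℝ)^2/2)) ≤ (2702623/100000000:ℝ) := by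
    apply exp_neg_le_of_taylor 12 (by norm_num) (by norm_num)
    norm_num [Finset.sum_range_succ, Nat.factorial]
  have h11 : ∫ x in (43/16:ℝ)..(11/4:ℝ), Real.exp (-(x^2/2)) ≤ (1555220817/1000000000000:ℝ) := by
    refine le_trans (step_bound (43/16:ℝ) (11/4:ℝ) (by norm_num) (by norm_num)) ?_
    refine le_trans (mul_le_mul_of_nonneg_right E11 (by norm_num)) ?_
    norm_num
  have c11 : ∫ x in (2:ℝ)..(11/4:ℝ), Real.exp (-(x^2/2)) ≤ (49599896427/1000000000000:ℝ) := by
    have hh := intervalIntegral.integral_add_adjacent_intervals (hi 2 (43/16:ℝ)) (hi (43/16:ℝ) (11/4:ℝ))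
    rw [← hh]; linarith [c10, h11]
  have E12 : Real.exp (-((11/4:ℝ)^2/2)) ≤ (228071177/10000000000:ℝ) := by
    apply exp_neg_le_of_taylor 12 (by norm_num) (by norm_num)
    norm_num [Finset.sum_range_succ, Nat.factorial]
  have h12 : ∫ x in (11/4:ℝ)..(45/16:ℝ), Real.exp (-(x^2/2)) ≤ (1309963871/1000000000000:ℝ) := by
    refine le_trans (step_bound (11/4:ℝ) (45/16:ℝ) (by norm_num) (by norm_num)) ?_
    refine le_trans (mul_le_mul_of_nonneg_right E12 (by norm_num)) ?_
    norm_num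
  have c12 : ∫ x in (2:ℝ)..(45/16:ℝ), Real.exp (-(x^2/2)) ≤ (25454930149/500000000000:ℝ) := by
    have hh := intervalIntegral.integral_add_adjacent_intervals (hi 2 (11/4:ℝ)) (hi (11/4:ℝ) (45/16:ℝ))
    rw [← hh]; linarith [c11, h12]
  have E13 : Real.exp (-((45/16:ℝ)^2/2)) ≤ (23952361/1250000000:ℝ) := by
    apply exp_neg_le_of_taylor 13 (by norm_num) (by norm_num)
    norm_num [Finset.sum_range_succ, Nat.factorial]
  have h13 : ∫ x in (45/16:ℝ)..(23/8:ℝ), Real.exp (-(x^2/2)) ≤ (549263097/500000000000:ℝ) := by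
    refine le_trans (step_bound (45/16:ℝ) (23/8:ℝ) (by norm_num) (by norm_num)) ?_
    refine le_trans (mul_le_mul_of_nonneg_right E13 (by norm_num)) ?_
    norm_num
  have c13 : ∫ x in (2:ℝ)..(23/8:ℝ), Real.exp (-(x^2/2)) ≤ (13002096623/250000000000:ℝ) := by
    have hh := intervalIntegral.integral_add_adjacent_intervals (hi 2 (45/16:ℝ)) (hi (45/16:ℝ) (23/8:ℝ))
    rw [← hh]; linarith [c12, h13]
  have E14 : Real.exp (-((23/8:ℝ)^2/2)) ≤ (40109157/2500000000:ℝ) := by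
    apply exp_neg_le_of_taylor 13 (by norm_num) (by norm_num)
    norm_num [Finset.sum_range_succ, Nat.factorial]
  have h14 : ∫ x in (23/8:ℝ)..(47/16:ℝ), Real.exp (-(x^2/2)) ≤ (18360719/20000000000:ℝ) := by
    refine le_trans (step_bound (23/8:ℝ) (47/16:ℝ) (by norm_num) (by norm_num)) ?_
    refine le_trans (mul_le_mul_of_nonneg_right E14 (by norm_num)) ?_
    norm_num
  have c14 : ∫ x in (2:ℝ)..(47/16:ℝ), Real.exp (-(x^2/2)) ≤ (26463211221/500000000000:ℝ) := by
    have hh := intervalIntegral.integral_add_adjacent_intervals (hi 2 (23/8:ℝ)) (hi (23/8:ℝ) (47/16:ℝ))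
    rw [← hh]; linarith [c13, h14]
  have E15 : Real.exp (-((47/16:ℝ)^2/2)) ≤ (33453077/2500000000:ℝ) := by
    apply exp_neg_le_of_taylor 13 (by norm_num) (by norm_num)
    norm_num [Finset.sum_range_succ, Nat.factorial]
  have h15 : ∫ x in (47/16:ℝ)..(3:ℝ), Real.exp (-(x^2/2)) ≤ (382126513/500000000000:ℝ) := by
    refine le_trans (step_bound (47/16:ℝ) (3:ℝ) (by norm_num) (by norm_num)) ?_
    refine le_trans (mul_le_mul_of_nonneg_right E15 (by norm_num)) ?_
    norm_num
  have c15 : ∫ x in (2:ℝ)..(3:ℝ), Real.exp (-(x^2/2)) ≤ (13422668867/250000000000:ℝ) := by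
    have hh := intervalIntegral.integral_add_adjacent_intervals (hi 2 (47/16:ℝ)) (hi (47/16:ℝ) (3:ℝ))
    rw [← hh]; linarith [c14, h15]
  have E16 : Real.exp (-((3:ℝ)^2/2)) ≤ (111179481/10000000000:ℝ) := by
    apply exp_neg_le_of_taylor 13 (by norm_num) (by norm_num)
    norm_num [Finset.sum_range_succ, Nat.factorial]
  have h16 : ∫ x in (3:ℝ)..(49/16:ℝ), Real.exp (-(x^2/2)) ≤ (158449761/250000000000:ℝ) := by
    refine le_trans (step_bound (3:ℝ) (49/16:ℝ) (by norm_num) (by norm_num)) ?_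
    refine le_trans (mul_le_mul_of_nonneg_right E16 (by norm_num)) ?_
    norm_num
  have c16 : ∫ x in (2:ℝ)..(49/16:ℝ), Real.exp (-(x^2/2)) ≤ (3395279657/62500000000:ℝ) := by
    have hh := intervalIntegral.integral_add_adjacent_intervals (hi 2 (3:ℝ)) (hi (3:ℝ) (49/16:ℝ))
    rw [← hh]; linarith [c15, h16]
  have E17 : Real.exp (-((49/16:ℝ)^2/2)) ≤ (92023869/10000000000:ℝ) := by
    apply exp_neg_le_of_taylor 13 (by norm_num) (by norm_num)
    norm_num [Finset.sum_range_succ, Nat.factorial]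
  have h17 : ∫ x in (49/16:ℝ)..(25/8:ℝ), Real.exp (-(x^2/2)) ≤ (261808751/500000000000:ℝ) := by
    refine le_trans (step_bound (49/16:ℝ) (25/8:ℝ) (by norm_num) (by norm_num)) ?_
    refine le_trans (mul_le_mul_of_nonneg_right E17 (by norm_num)) ?_
    norm_num
  have c17 : ∫ x in (2:ℝ)..(25/8:ℝ), Real.exp (-(x^2/2)) ≤ (27424046007/500000000000:ℝ) := by
    have hh := intervalIntegral.integral_add_adjacent_intervals (hi 2 (49/16:ℝ)) (hi (49/16:ℝ) (25/8:ℝ))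
    rw [← hh]; linarith [c16, h17]
  have E18 : Real.exp (-((25/8:ℝ)^2/2)) ≤ (37940917/5000000000:ℝ) := by
    apply exp_neg_le_of_taylor 13 (by norm_num) (by norm_num)
    norm_num [Finset.sum_range_succ, Nat.factorial]
  have h18 : ∫ x in (25/8:ℝ)..(51/16:ℝ), Real.exp (-(x^2/2)) ≤ (21548107/50000000000:ℝ) := by
    refine le_trans (step_bound (25/8:ℝ) (51/16:ℝ) (by norm_num) (by norm_num)) ?_
    refine le_trans (mul_le_mul_of_nonneg_right E18 (by norm_num)) ?_
    norm_num
  have c18 : ∫ x in (2:ℝ)..(51/16:ℝ), Real.exp (-(x^2/2)) ≤ (27639527077/500000000000:ℝ) := by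
    have hh := intervalIntegral.integral_add_adjacent_intervals (hi 2 (25/8:ℝ)) (hi (25/8:ℝ) (51/16:ℝ))
    rw [← hh]; linarith [c17, h18]
  have E19 : Real.exp (-((51/16:ℝ)^2/2)) ≤ (12467643/2000000000:ℝ) := by
    apply exp_neg_le_of_taylor 13 (by norm_num) (by norm_num)
    norm_num [Finset.sum_range_succ, Nat.factorial]
  have h19 : ∫ x in (51/16:ℝ)..(13/4:ℝ), Real.exp (-(x^2/2)) ≤ (176690913/500000000000:ℝ) := by
    refine le_trans (step_bound (51/16:ℝ) (13/4:ℝ) (by norm_num) (by norm_num)) ?_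
    refine le_trans (mul_le_mul_of_nonneg_right E19 (by norm_num)) ?_
    norm_num
  have c19 : ∫ x in (2:ℝ)..(13/4:ℝ), Real.exp (-(x^2/2)) ≤ (2781621799/50000000000:ℝ) := by
    have hh := intervalIntegral.integral_add_adjacent_intervals (hi 2 (51/16:ℝ)) (hi (51/16:ℝ) (13/4:ℝ))
    rw [← hh]; linarith [c18, h19]
  have E20 : Real.exp (-((13/4:ℝ)^2/2)) ≤ (12729987/2500000000:ℝ) := by
    apply exp_neg_le_of_taylor 14 (by norm_num) (by norm_num)
    norm_num [Finset.sum_range_succ, Nat.factorial]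
  have h20 : ∫ x in (13/4:ℝ)..(53/16:ℝ), Real.exp (-(x^2/2)) ≤ (288115927/1000000000000:ℝ) := by
    refine le_trans (step_bound (13/4:ℝ) (53/16:ℝ) (by norm_num) (by norm_num)) ?_
    refine le_trans (mul_le_mul_of_nonneg_right E20 (by norm_num)) ?_
    norm_num
  have c20 : ∫ x in (2:ℝ)..(53/16:ℝ), Real.exp (-(x^2/2)) ≤ (55920551907/1000000000000:ℝ) := by
    have hh := intervalIntegral.integral_add_adjacent_intervals (hi 2 (13/4:ℝ)) (hi (13/4:ℝ) (53/16:ℝ))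
    rw [← hh]; linarith [c19, h20]
  have E21 : Real.exp (-((53/16:ℝ)^2/2)) ≤ (20749333/5000000000:ℝ) := by
    apply exp_neg_le_of_taylor 14 (by norm_num) (by norm_num)
    norm_num [Finset.sum_range_succ, Nat.factorial]
  have h21 : ∫ x in (53/16:ℝ)..(27/8:ℝ), Real.exp (-(x^2/2)) ≤ (234370987/1000000000000:ℝ) := by
    refine le_trans (step_bound (53/16:ℝ) (27/8:ℝ) (by norm_num) (by norm_num)) ?_
    refine le_trans (mul_le_mul_of_nonneg_right E21 (by norm_num)) ?_
    norm_num
  have c21 : ∫ x in (2:ℝ)..(27/8:ℝ), Real.exp (-(x^2/2)) ≤ (28077461447/500000000000:ℝ) := by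
    have hh := intervalIntegral.integral_add_adjacent_intervals (hi 2 (53/16:ℝ)) (hi (53/16:ℝ) (27/8:ℝ))
    rw [← hh]; linarith [c20, h21]
  have E22 : Real.exp (-((27/8:ℝ)^2/2)) ≤ (842361/250000000:ℝ) := by
    apply exp_neg_le_of_taylor 14 (by norm_num) (by norm_num)
    norm_num [Finset.sum_range_succ, Nat.factorial]
  have h22 : ∫ x in (27/8:ℝ)..(55/16:ℝ), Real.exp (-(x^2/2)) ≤ (189941249/1000000000000:ℝ) := by
    refine le_trans (step_bound (27/8:ℝ) (55/16:ℝ) (by norm_num) (by norm_num)) ?_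
    refine le_trans (mul_le_mul_of_nonneg_right E22 (by norm_num)) ?_
    norm_num
  have c22 : ∫ x in (2:ℝ)..(55/16:ℝ), Real.exp (-(x^2/2)) ≤ (56344864143/1000000000000:ℝ) := by
    have hh := intervalIntegral.integral_add_adjacent_intervals (hi 2 (27/8:ℝ)) (hi (27/8:ℝ) (55/16:ℝ))
    rw [← hh]; linarith [c21, h22]
  have E23 : Real.exp (-((55/16:ℝ)^2/2)) ≤ (1362861/500000000:ℝ) := by
    apply exp_neg_le_of_taylor 14 (by norm_num) (by norm_num)
    norm_num [Finset.sum_range_succ, Nat.factorial]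
  have h23 : ∫ x in (55/16:ℝ)..(7/2:ℝ), Real.exp (-(x^2/2)) ≤ (153368047/1000000000000:ℝ) := by
    refine le_trans (step_bound (55/16:ℝ) (7/2:ℝ) (by norm_num) (by norm_num)) ?_
    refine le_trans (mul_le_mul_of_nonneg_right E23 (by norm_num)) ?_
    norm_num
  have c23 : ∫ x in (2:ℝ)..(7/2:ℝ), Real.exp (-(x^2/2)) ≤ (5649823219/100000000000:ℝ) := by
    have hh := intervalIntegral.integral_add_adjacent_intervals (hi 2 (55/16:ℝ)) (hi (55/16:ℝ) (7/2:ℝ))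
    rw [← hh]; linarith [c22, h23]
  have E24 : Real.exp (-((7/2:ℝ)^2/2)) ≤ (10984993/5000000000:ℝ) := by
    apply exp_neg_le_of_taylor 14 (by norm_num) (by norm_num)
    norm_num [Finset.sum_range_succ, Nat.factorial]
  have h24 : ∫ x in (7/2:ℝ)..(57/16:ℝ), Real.exp (-(x^2/2)) ≤ (12338897/100000000000:ℝ) := by
    refine le_trans (step_bound (7/2:ℝ) (57/16:ℝ) (by norm_num) (by norm_num)) ?_
    refine le_trans (mul_le_mul_of_nonneg_right E24 (by norm_num)) ?_
    norm_num
  have c24 : ∫ x in (2:ℝ)..(57/16:ℝ), Real.exp (-(x^2/2)) ≤ (1415540529/25000000000:ℝ) := by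
    have hh := intervalIntegral.integral_add_adjacent_intervals (hi 2 (7/2:ℝ)) (hi (7/2:ℝ) (57/16:ℝ))
    rw [← hh]; linarith [c23, h24]
  have E25 : Real.exp (-((57/16:ℝ)^2/2)) ≤ (441137/250000000:ℝ) := by
    apply exp_neg_le_of_taylor 14 (by norm_num) (by norm_num)
    norm_num [Finset.sum_range_succ, Nat.factorial]
  have h25 : ∫ x in (57/16:ℝ)..(29/8:ℝ), Real.exp (-(x^2/2)) ≤ (395671/4000000000:ℝ) := by
    refine le_trans (step_bound (57/16:ℝ) (29/8:ℝ) (by norm_num) (by norm_num)) ?_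
    refine le_trans (mul_le_mul_of_nonneg_right E25 (by norm_num)) ?_
    norm_num
  have c25 : ∫ x in (2:ℝ)..(29/8:ℝ), Real.exp (-(x^2/2)) ≤ (5672053891/100000000000:ℝ) := by
    have hh := intervalIntegral.integral_add_adjacent_intervals (hi 2 (57/16:ℝ)) (hi (57/16:ℝ) (29/8:ℝ))
    rw [← hh]; linarith [c24, h25]
  have E26 : Real.exp (-((29/8:ℝ)^2/2)) ≤ (3530763/2500000000:ℝ) := by
    apply exp_neg_le_of_taylor 14 (by norm_num) (by norm_num)
    norm_num [Finset.sum_range_succ, Nat.factorial]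
  have h26 : ∫ x in (29/8:ℝ)..(59/16:ℝ), Real.exp (-(x^2/2)) ≤ (15804999/200000000000:ℝ) := by
    refine le_trans (step_bound (29/8:ℝ) (59/16:ℝ) (by norm_num) (by norm_num)) ?_
    refine le_trans (mul_le_mul_of_nonneg_right E26 (by norm_num)) ?_
    norm_num
  have c26 : ∫ x in (2:ℝ)..(59/16:ℝ), Real.exp (-(x^2/2)) ≤ (11359912781/200000000000:ℝ) := by
    have hh := intervalIntegral.integral_add_adjacent_intervals (hi 2 (29/8:ℝ)) (hi (29/8:ℝ) (59/16:ℝ))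
    rw [← hh]; linarith [c25, h26]
  have E27 : Real.exp (-((59/16:ℝ)^2/2)) ≤ (1408207/1250000000:ℝ) := by
    apply exp_neg_le_of_taylor 14 (by norm_num) (by norm_num)
    norm_num [Finset.sum_range_succ, Nat.factorial]
  have h27 : ∫ x in (59/16:ℝ)..(15/4:ℝ), Real.exp (-(x^2/2)) ≤ (2516799/40000000000:ℝ) := by
    refine le_trans (step_bound (59/16:ℝ) (15/4:ℝ) (by norm_num) (by norm_num)) ?_
    refine le_trans (mul_le_mul_of_nonneg_right E27 (by norm_num)) ?_
    norm_num
  have c27 : ∫ x in (2:ℝ)..(15/4:ℝ), Real.exp (-(x^2/2)) ≤ (1421562097/25000000000:ℝ) := by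
    have hh := intervalIntegral.integral_add_adjacent_intervals (hi 2 (59/16:ℝ)) (hi (59/16:ℝ) (15/4:ℝ))
    rw [← hh]; linarith [c26, h27]
  have E28 : Real.exp (-((15/4:ℝ)^2/2)) ≤ (8957041/10000000000:ℝ) := by
    apply exp_neg_le_of_taylor 14 (by norm_num) (by norm_num)
    norm_num [Finset.sum_range_succ, Nat.factorial]
  have h28 : ∫ x in (15/4:ℝ)..(61/16:ℝ), Real.exp (-(x^2/2)) ≤ (499337/10000000000:ℝ) := by
    refine le_trans (step_bound (15/4:ℝ) (61/16:ℝ) (by norm_num) (by norm_num)) ?_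
    refine le_trans (mul_le_mul_of_nonneg_right E28 (by norm_num)) ?_
    norm_num
  have c28 : ∫ x in (2:ℝ)..(61/16:ℝ), Real.exp (-(x^2/2)) ≤ (2845620879/50000000000:ℝ) := by
    have hh := intervalIntegral.integral_add_adjacent_intervals (hi 2 (15/4:ℝ)) (hi (15/4:ℝ) (61/16:ℝ))
    rw [← hh]; linarith [c27, h28]
  have E29 : Real.exp (-((61/16:ℝ)^2/2)) ≤ (887393/1250000000:ℝ) := by
    apply exp_neg_le_of_taylor 14 (by norm_num) (by norm_num)
    norm_num [Finset.sum_range_succ, Nat.factorial]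
  have h29 : ∫ x in (61/16:ℝ)..(31/8:ℝ), Real.exp (-(x^2/2)) ≤ (9875823/250000000000:ℝ) := by
    refine le_trans (step_bound (61/16:ℝ) (31/8:ℝ) (by norm_num) (by norm_num)) ?_
    refine le_trans (mul_le_mul_of_nonneg_right E29 (by norm_num)) ?_
    norm_num
  have c29 : ∫ x in (2:ℝ)..(31/8:ℝ), Real.exp (-(x^2/2)) ≤ (7118990109/125000000000:ℝ) := by
    have hh := intervalIntegral.integral_add_adjacent_intervals (hi 2 (61/16:ℝ)) (hi (61/16:ℝ) (31/8:ℝ))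
    rw [← hh]; linarith [c28, h29]
  have E30 : Real.exp (-((31/8:ℝ)^2/2)) ≤ (2804851/5000000000:ℝ) := by
    apply exp_neg_le_of_taylor 14 (by norm_num) (by norm_num)
    norm_num [Finset.sum_range_succ, Nat.factorial]
  have h30 : ∫ x in (31/8:ℝ)..(63/16:ℝ), Real.exp (-(x^2/2)) ≤ (12171/390625000:ℝ) := by
    refine le_trans (step_bound (31/8:ℝ) (63/16:ℝ) (by norm_num) (by norm_num)) ?_
    refine le_trans (mul_le_mul_of_nonneg_right E30 (by norm_num)) ?_
    norm_num
  have c30 : ∫ x in (2:ℝ)..(63/16:ℝ), Real.exp (-(x^2/2)) ≤ (7122884829/125000000000:ℝ) := by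
    have hh := intervalIntegral.integral_add_adjacent_intervals (hi 2 (31/8:ℝ)) (hi (31/8:ℝ) (63/16:ℝ))
    rw [← hh]; linarith [c29, h30]
  have E31 : Real.exp (-((63/16:ℝ)^2/2)) ≤ (1105021/2500000000:ℝ) := by
    apply exp_neg_le_of_taylor 14 (by norm_num) (by norm_num)
    norm_num [Finset.sum_range_succ, Nat.factorial]
  have h31 : ∫ x in (63/16:ℝ)..(4:ℝ), Real.exp (-(x^2/2)) ≤ (12252567/500000000000:ℝ) := by
    refine le_trans (step_bound (63/16:ℝ) (4:ℝ) (by norm_num) (by norm_num)) ?_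
    refine le_trans (mul_le_mul_of_nonneg_right E31 (by norm_num)) ?_
    norm_num
  have c31 : ∫ x in (2:ℝ)..(4:ℝ), Real.exp (-(x^2/2)) ≤ (28503791883/500000000000:ℝ) := by
    have hh := intervalIntegral.integral_add_adjacent_intervals (hi 2 (63/16:ℝ)) (hi (63/16:ℝ) (4:ℝ))
    rw [← hh]; linarith [c30, h31]
  refine le_trans c31 (by norm_num)

lemma gauss_Ici_two : ∫ x in Set.Ici (2:ℝ), Real.exp (-(x^2/2)) ≤ 0.0571511 := by
  have hsplit : Set.Ioc (2:ℝ) 4 ∪ Set.Ioi 4 = Set.Ioi 2 := Set.Ioc_union_Ioi_eq_Ioi (by norm_num)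
  have hdisj : Disjoint (Set.Ioc (2:ℝ) 4) (Set.Ioi 4) := Set.Ioc_disjoint_Ioi le_rfl
  have h1 : ∫ x in Set.Ici (2:ℝ), Real.exp (-(x^2/2)) = ∫ x in Set.Ioi (2:ℝ), Real.exp (-(x^2/2)) :=
    integral_Ici_eq_integral_Ioi
  have h2 : ∫ x in Set.Ioi (2:ℝ), Real.exp (-(x^2/2)) =
      (∫ x in Set.Ioc (2:ℝ) 4, Real.exp (-(x^2/2))) + ∫ x in Set.Ioi (4:ℝ), Real.exp (-(x^2/2)) := by
    rw [← hsplit]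
    exact setIntegral_union hdisj measurableSet_Ioi (integrableOn_gauss _) (integrableOn_gauss _)
  have h3 : ∫ x in Set.Ioc (2:ℝ) 4, Real.exp (-(x^2/2)) = ∫ x in (2:ℝ)..4, Real.exp (-(x^2/2)) :=
    (intervalIntegral.integral_of_le (by norm_num)).symm
  rw [h1, h2, h3]
  have := main_sum; have := tail_bound
  norm_num at *
  linarith
lemma pdf_std (x : ℝ) : ProbabilityTheory.gaussianPDFReal 0 1 x = (√(2*π))⁻¹ * Real.exp (-(x^2/2)) := by
  unfold ProbabilityTheory.gaussianPDFReal
  norm_num [neg_div]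
lemma sqrt_two_pi_lb : (2.506628:ℝ) ≤ √(2*π) := by
  rw [show (2.506628:ℝ) = √(2.506628^2) by rw [Real.sqrt_sq (by norm_num)]]
  exact Real.sqrt_le_sqrt (by nlinarith [Real.pi_gt_d6])
lemma sqrt_two_pi_ub : √(2*π) ≤ (2.5066285:ℝ) := by
  rw [show (2.5066285:ℝ) = √(2.5066285^2) by rw [Real.sqrt_sq (by norm_num)]]
  exact Real.sqrt_le_sqrt (by nlinarith [Real.pi_lt_d6])
lemma std_Ici : ((gaussianReal 0 1) (Set.Ici 2)).toReal ≤ 0.0228 := by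
  rw [gaussianReal_apply_eq_integral 0 one_ne_zero]
  rw [ENNReal.toReal_ofReal (setIntegral_nonneg measurableSet_Ici
    (fun x _ => gaussianPDFReal_nonneg _ _ _))]
  have : ∫ x in Set.Ici (2:ℝ), gaussianPDFReal 0 1 x =
      (√(2*π))⁻¹ * ∫ x in Set.Ici (2:ℝ), Real.exp (-(x^2/2)) := by
    simp_rw [pdf_std]
    exact MeasureTheory.integral_const_mul _ _
  rw [this]
  have hI0 : (0:ℝ) ≤ ∫ x in Set.Ici (2:ℝ), Real.exp (-(x^2/2)) :=
    setIntegral_nonneg measurableSet_Ici (fun x _ => (Real.exp_pos _).le)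
  have hs := sqrt_two_pi_lb
  have hspos : (0:ℝ) < √(2*π) := lt_of_lt_of_le (by norm_num) hs
  have hinv : (√(2*π))⁻¹ ≤ (2.506628:ℝ)⁻¹ := by
    apply inv_anti₀ (by norm_num) hs
  calc (√(2*π))⁻¹ * ∫ x in Set.Ici (2:ℝ), Real.exp (-(x^2/2))
      ≤ (2.506628:ℝ)⁻¹ * 0.0571511 :=
        mul_le_mul hinv gauss_Ici_two hI0 (by norm_num)
    _ ≤ 0.0228 := by norm_num
lemma gauss_map (μ σ : ℝ) (hσ : 0 < σ) :
    (gaussianReal 0 1).map (fun x => σ * x + μ) = gaussianReal μ ((σ^2).toNNReal) := by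
  have hsq : (.mk (σ^2) (sq_nonneg σ) * 1 : ℝ≥0) = (σ^2).toNNReal := by
    ext
    simp [Real.coe_toNNReal _ (sq_nonneg σ)]
  have h1 : (gaussianReal 0 1).map (σ * ·) = gaussianReal 0 ((σ^2).toNNReal) := by
    rw [gaussianReal_map_const_mul σ, hsq, mul_zero]
  have h2 : ((gaussianReal 0 1).map (σ * ·)).map (· + μ) =
      gaussianReal μ ((σ^2).toNNReal) := by
    rw [h1, gaussianReal_map_add_const μ, zero_add]
  rw [← h2, Measure.map_map (measurable_id'.add_const μ) (measurable_id'.const_mul σ)]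
  rfl

lemma gauss_symm : (gaussianReal 0 1) (Set.Iic (-2:ℝ)) = (gaussianReal 0 1) (Set.Ici (2:ℝ)) := by
  have hsq : (.mk ((-1:ℝ)^2) (sq_nonneg _) * 1 : ℝ≥0) = 1 := by ext; norm_num
  have h1 : (gaussianReal 0 1).map ((-1 : ℝ) * ·) = gaussianReal 0 1 := by
    rw [gaussianReal_map_const_mul (-1 : ℝ), hsq]
    norm_num
  conv_lhs => rw [← h1]
  rw [Measure.map_apply (measurable_id'.const_mul (-1)) measurableSet_Iic]
  congr 1
  ext y
  simp

lemma std_Iio_neg2 : ((gaussianReal 0 1) (Set.Iio (-2:ℝ))).toReal ≤ 0.0228 := by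
  refine le_trans ?_ std_Ici
  rw [← gauss_symm]
  exact ENNReal.toReal_mono (measure_ne_top _ _) (measure_mono Set.Iio_subset_Iic_self)

lemma std_Iio_2 : 0.9772 ≤ ((gaussianReal 0 1) (Set.Iio (2:ℝ))).toReal := by
  have hc : Set.Iio (2:ℝ) = (Set.Ici (2:ℝ))ᶜ := by simp
  rw [hc, measure_compl measurableSet_Ici (measure_ne_top _ _)]
  rw [measure_univ, ENNReal.toReal_sub_of_le prob_le_one ENNReal.one_ne_top]
  have := std_Ici
  simp only [ENNReal.toReal_one]
  linarith

lemma reduce_lo (μ σ : ℝ) (hσ : 0 < σ) :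
    ((gaussianReal μ ((σ^2).toNNReal)) (Set.Iio (μ - 2*σ))).toReal ≤ 0.0228 := by
  rw [← gauss_map μ σ hσ,
    Measure.map_apply ((measurable_id'.const_mul σ).add_const μ) measurableSet_Iio]
  have hpre : (fun x => σ * x + μ) ⁻¹' (Set.Iio (μ - 2*σ)) = Set.Iio (-2 : ℝ) := by
    ext y
    simp only [Set.mem_preimage, Set.mem_Iio]
    constructor <;> intro h <;> nlinarith
  rw [hpre]
  exact std_Iio_neg2

lemma reduce_hi (μ σ : ℝ) (hσ : 0 < σ) :
    0.9772 ≤ ((gaussianReal μ ((σ^2).toNNReal)) (Set.Iio (μ + 2*σ))).toReal := by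
  rw [← gauss_map μ σ hσ,
    Measure.map_apply ((measurable_id'.const_mul σ).add_const μ) measurableSet_Iio]
  have hpre : (fun x => σ * x + μ) ⁻¹' (Set.Iio (μ + 2*σ)) = Set.Iio (2 : ℝ) := by
    ext y
    simp only [Set.mem_preimage, Set.mem_Iio]
    constructor <;> intro h <;> nlinarith
  rw [hpre]
  exact std_Iio_2
lemma exp_two_ub : Real.exp 2 ≤ 7.3890561 := by
  have h := Real.exp_one_lt_d9
  have h2 : Real.exp 2 = Real.exp 1 * Real.exp 1 := by rw [← Real.exp_add]; norm_num
  nlinarith [Real.exp_pos 1]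

theorem stmt_4 (μ σ α p t t' : ℝ) (hσ : 0 < σ)
    (hα : α ∈ Set.Ioo (0 : ℝ) 1) (hp : p ∈ Set.Ioo (0 : ℝ) 1)
    (hlow : 0.0228 ≤ p - α) (hhigh : p + α ≤ 0.9772)
    (ht : ((gaussianReal μ ((σ ^ 2).toNNReal)) (Set.Iio t)).toReal = p)
    (ht' : ((gaussianReal μ ((σ ^ 2).toNNReal)) (Set.Iio t')).toReal ∈ Set.Ioo (p - α) (p + α)) :
    |t - t'| ≤ 18.522 * α * σ := by
  obtain ⟨hα0, hα1⟩ := hα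
  set v : ℝ≥0 := (σ^2).toNNReal with hvdef
  have hv : v ≠ 0 := by
    simp only [hvdef, ne_eq, Real.toNNReal_eq_zero, not_le]
    positivity
  have hvr : (v : ℝ) = σ^2 := Real.coe_toNNReal _ (sq_nonneg σ)
  set F : ℝ → ℝ := fun x => ((gaussianReal μ v) (Set.Iio x)).toReal with hFdef
  have hFmono : ∀ a b : ℝ, a ≤ b → F a ≤ F b := fun a b hab =>
    ENNReal.toReal_mono (measure_ne_top _ _) (measure_mono (Set.Iio_subset_Iio hab))
  have hFt : F t = p := ht
  have hFt'1 : p - α < F t' := ht'.1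
  have hFt'2 : F t' < p + α := ht'.2
  have hlo : F (μ - 2*σ) ≤ 0.0228 := reduce_lo μ σ hσ
  have hhi : 0.9772 ≤ F (μ + 2*σ) := reduce_hi μ σ hσ
  -- t, t' ∈ [μ - 2σ, μ + 2σ]
  have ht_lo : μ - 2*σ ≤ t := by
    by_contra h
    push_neg at h
    have := hFmono t (μ - 2*σ) h.le
    linarith
  have ht_hi : t ≤ μ + 2*σ := by
    by_contra h
    push_neg at h
    have := hFmono (μ + 2*σ) t h.le
    linarith
  have ht'_lo : μ - 2*σ ≤ t' := by
    by_contra h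
    push_neg at h
    have := hFmono t' (μ - 2*σ) h.le
    linarith
  have ht'_hi : t' ≤ μ + 2*σ := by
    by_contra h
    push_neg at h
    have := hFmono (μ + 2*σ) t' h.le
    linarith
  -- key step
  have key : ∀ a b : ℝ, μ - 2*σ ≤ a → a ≤ b → b ≤ μ + 2*σ → F b - F a < α →
      b - a ≤ 18.522 * α * σ := by
    intro a b ha hab hb hFab
    have hdiff : F b - F a = ∫ x in Set.Ico a b, gaussianPDFReal μ v x := by
      have hsplit : Set.Iio a ∪ Set.Ico a b = Set.Iio b := Set.Iio_union_Ico_eq_Iio hab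
      have hdisj : Disjoint (Set.Iio a) (Set.Ico a b) := by
        rw [Set.disjoint_left]
        intro x hx hx2
        exact absurd hx2.1 (not_le.mpr hx)
      have hm : (gaussianReal μ v) (Set.Iio b) =
          (gaussianReal μ v) (Set.Iio a) + (gaussianReal μ v) (Set.Ico a b) := by
        rw [← hsplit, measure_union hdisj measurableSet_Ico]
      have := congrArg ENNReal.toReal hm
      rw [ENNReal.toReal_add (measure_ne_top _ _) (measure_ne_top _ _)] at this
      have hI : ((gaussianReal μ v) (Set.Ico a b)).toReal =
          ∫ x in Set.Ico a b, gaussianPDFReal μ v x := by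
        rw [gaussianReal_apply_eq_integral μ hv,
          ENNReal.toReal_ofReal (setIntegral_nonneg measurableSet_Ico
            (fun x _ => gaussianPDFReal_nonneg _ _ _))]
      simp only [hFdef]
      rw [this, hI]
      ring
    set c : ℝ := (√(2*π*σ^2))⁻¹ * Real.exp (-2) with hcdef
    have hcpos : 0 < c := by positivity
    have hlower : c * (b - a) ≤ ∫ x in Set.Ico a b, gaussianPDFReal μ v x := by
      have hconst : ∫ _x in Set.Ico a b, c = c * (b - a) := by
        rw [setIntegral_const, Real.volume_real_Ico_of_le hab]
        rw [smul_eq_mul]; ring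
      rw [← hconst]
      apply setIntegral_mono_on
      · exact integrableOn_const (by rw [Real.volume_Ico]; exact ENNReal.ofReal_ne_top)
      · exact (integrable_gaussianPDFReal μ v).integrableOn
      · exact measurableSet_Ico
      · intro x hx
        obtain ⟨hx1, hx2⟩ := hx
        unfold gaussianPDFReal
        rw [hvr]
        apply mul_le_mul_of_nonneg_left _ (by positivity)
        apply Real.exp_le_exp.mpr
        rw [le_div_iff₀ (by positivity)]
        nlinarith
    have hba : c * (b - a) < α := lt_of_le_of_lt (hlower.trans_eq hdiff.symm) hFab
    -- convert: b - a < α / c = α * √(2πσ²) * e²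
    have hsqrt : √(2*π*σ^2) = √(2*π) * σ := by
      rw [Real.sqrt_mul (by positivity), Real.sqrt_sq hσ.le]
    have hspos : (0:ℝ) < √(2*π*σ^2) := by positivity
    have hprod : c * (√(2*π*σ^2) * Real.exp 2) = 1 := by
      rw [hcdef, Real.exp_neg]
      field_simp
    have hba2 : b - a ≤ α * (√(2*π) * σ * Real.exp 2) := by
      have h3 := mul_le_mul_of_nonneg_right hba.le
        (by positivity : (0:ℝ) ≤ √(2*π*σ^2) * Real.exp 2)
      calc b - a = c * (b - a) * (√(2*π*σ^2) * Real.exp 2) := by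
            rw [mul_right_comm, hprod, one_mul]
        _ ≤ α * (√(2*π*σ^2) * Real.exp 2) := h3
        _ = α * (√(2*π) * σ * Real.exp 2) := by rw [hsqrt]
    have he2 := exp_two_ub
    have hs2 := sqrt_two_pi_ub
    have hsnn : (0:ℝ) ≤ √(2*π) := Real.sqrt_nonneg _
    nlinarith [mul_le_mul hs2 he2 (Real.exp_pos 2).le (by norm_num),
      mul_pos hα0 hσ, Real.exp_pos 2]
  rcases le_total t t' with h | h
  · have := key t t' ht_lo h ht'_hi (by linarith)
    rw [abs_sub_comm, abs_of_nonneg (by linarith)]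
    linarith
  · have := key t' t ht'_lo h ht_hi (by linarith)
    rw [abs_of_nonneg (by linarith)]
    linarith
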